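/- Let y be a string over an alphabet Σ. For every x ∈ Substr(y), (Lrep_y(x))^R = Rrep_{y^R}(x^R), i.e., the reversal of the longest string left-equivalent to x in y equals the longest string right-equivalent to x^R in the reversed string y^R. (This underlies the fact that the suffix-tree nodes of y with their Weiner links form the DAWG of y^R.) -/

import Mathlib

open List

/-- 1-indexed beginning positions of occurrences of `x` in `y`:
`BegPos y x = { i | 1 ≤ i ≤ |y| - |x| + 1, y[i..i+|x|-1] = x }`. -/
def BegPos {α : Type*} (y x : List α) : Set ℕ :=
  {i | 1 ≤ i ∧ i ≤ y.length - x.length + 1 ∧ x <+: y.drop (i - 1)}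

/-- 1-indexed ending positions of occurrences of `x` in `y`:
`EndPos y x = { i | |x| ≤ i ≤ |y|, y[i-|x|+1..i] = x }`. -/
def EndPos {α : Type*} (y x : List α) : Set ℕ :=
  {i | x.length ≤ i ∧ i ≤ y.length ∧ x <:+ y.take i}

/-- `IsLrepOf y w x` means `w = Lrep_y(x)`: `w` is left-equivalent to `x` in `y`
(`BegPos y w = BegPos y x`) and is the longest such string. -/
def IsLrepOf {α : Type*} (y w x : List α) : Prop :=
  BegPos y w = BegPos y x ∧ ∀ v : List α, BegPos y v = BegPos y x → v.length ≤ w.length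

/-- `IsRrepOf y w x` means `w = Rrep_y(x)`: `w` is right-equivalent to `x` in `y`
(`EndPos y w = EndPos y x`) and is the longest such string. -/
def IsRrepOf {α : Type*} (y w x : List α) : Prop :=
  EndPos y w = EndPos y x ∧ ∀ v : List α, EndPos y v = EndPos y x → v.length ≤ w.length

/-- `x` is a minimal absent word of `y`: `x` is not a substring of `y` and
every proper substring of `x` is a substring of `y`. -/
def IsMAW {α : Type*} (y x : List α) : Prop :=
  ¬ x <:+: y ∧ ∀ w : List α, w <:+: x → w ≠ x → w <:+: y


lemma take_reverse_eq {α : Type*} (y : List α) (k : ℕ) :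
    y.reverse.take k = (y.drop (y.length - k)).reverse := by
  have h := List.reverse_take (i := k) (l := y.reverse)
  simp only [List.length_reverse, List.reverse_reverse] at h
  rw [← h, List.reverse_reverse]

lemma mem_EndPos_rev {α : Type*} (y x : List α) (j : ℕ) :
    j ∈ EndPos y.reverse x.reverse ↔
      j ≤ y.length ∧ (y.length + 1 - j) ∈ BegPos y x := by
  simp only [EndPos, BegPos, Set.mem_setOf_eq, List.length_reverse]
  constructor
  · rintro ⟨h1, h2, h3⟩
    rw [take_reverse_eq, List.reverse_suffix] at h3
    have hlx := h3.length_le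
    rw [List.length_drop] at hlx
    refine ⟨h2, by omega, by omega, ?_⟩
    have : y.length + 1 - j - 1 = y.length - j := by omega
    rw [this]; exact h3
  · rintro ⟨hj, h1, h2, h3⟩
    have : y.length + 1 - j - 1 = y.length - j := by omega
    rw [this] at h3
    have hlx := h3.length_le
    rw [List.length_drop] at hlx
    refine ⟨by omega, hj, ?_⟩
    rw [take_reverse_eq, List.reverse_suffix]
    exact h3

lemma mem_BegPos_iff_rev {α : Type*} (y x : List α) (i : ℕ) :
    i ∈ BegPos y x ↔
      1 ≤ i ∧ i ≤ y.length + 1 ∧ (y.length + 1 - i) ∈ EndPos y.reverse x.reverse := by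
  constructor
  · intro hi
    obtain ⟨h1, h2, h3⟩ := hi
    have hi' : i ≤ y.length + 1 := by omega
    refine ⟨h1, hi', ?_⟩
    rw [mem_EndPos_rev]
    have : y.length + 1 - (y.length + 1 - i) = i := by omega
    rw [this]
    exact ⟨by omega, h1, h2, h3⟩
  · rintro ⟨h1, h2, h3⟩
    rw [mem_EndPos_rev] at h3
    have : y.length + 1 - (y.length + 1 - i) = i := by omega
    rw [this] at h3
    exact h3.2

theorem lrep_reverse_eq_rrep {α : Type*} (y x : List α) (hx : x <:+: y)
    (l : List α) (hl : IsLrepOf y l x) :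
    IsRrepOf y.reverse l.reverse x.reverse := by
  constructor
  · ext j
    rw [mem_EndPos_rev, mem_EndPos_rev, hl.1]
  · intro v hv
    have hb : BegPos y v.reverse = BegPos y x := by
      ext i
      rw [mem_BegPos_iff_rev, mem_BegPos_iff_rev, List.reverse_reverse, hv]
    have := hl.2 v.reverse hb
    simpa using this
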